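/- Let λ, μ, μ₀ > 0, let x ∈ (1, μμ₀/(λ(λ+μ₀))), let b satisfy μ/(λ+μ₀) < b < (λ+μ−xλ)/(λ+μ₀/x), and set a = x/b. Then λ + μ₀ − μ/b > 0 and λ + μ − λ(b + ab) − μ₀/a > 0. -/
import Mathlib

theorem stmt_7 (lam mu mu0 : ℝ) (hlam : 0 < lam) (hmu : 0 < mu) (hmu0 : 0 < mu0)
    (x : ℝ) (hx1 : 1 < x) (hx2 : x < mu * mu0 / (lam * (lam + mu0)))
    (b : ℝ) (hb1 : mu / (lam + mu0) < b)
    (hb2 : b < (lam + mu - x * lam) / (lam + mu0 / x)) :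
    0 < lam + mu0 - mu / b ∧
      0 < lam + mu - lam * (b + (x / b) * b) - mu0 / (x / b) := by
  have hx0 : (0:ℝ) < x := by linarith
  have hs : 0 < lam + mu0 := by linarith
  have hb0 : 0 < b := lt_trans (div_pos hmu hs) hb1
  have h1 : mu < b * (lam + mu0) := (div_lt_iff₀ hs).mp hb1
  have hden : 0 < lam + mu0 / x := by positivity
  have h2 : b * (lam + mu0 / x) < lam + mu - x * lam :=
    (lt_div_iff₀ hden).mp hb2
  constructor
  · rw [sub_pos, div_lt_iff₀ hb0]; nlinarith
  · have e1 : x / b * b = x := by field_simp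
    have e2 : mu0 / (x / b) = mu0 * b / x := by field_simp
    rw [e1, e2, sub_pos]
    rw [div_lt_iff₀ hx0]
    nlinarith [mul_lt_mul_of_pos_right h2 hx0, mul_div_cancel₀ mu0 hx0.ne']
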